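/- arXiv:0806.2182 — 2 statements merged into one kernel-verified Lean document; each statement's English description precedes it below -/
import Mathlib

section
/- For solutions of the Cucker-Smale system with kernel bounded above by r̄, the kinetic energy m₂(t) = ∑_{i=1}^N |v_i(t)|² satisfies the lower bound m₂(t) ≥ m₂(0) e^{−2λ r̄ t} + (|m₁(0)|²/N)(1 − e^{−2λ r̄ t}), where m₁(0) = ∑_{i=1}^N v_i(0). -/
open Real Finset

open RealInnerProductSpace

/-- Exponential-in-time lower bound on the kinetic energy for the Cucker-Smale system. -/
theorem cucker_smale_energy_lower_bound
    {d N : ℕ} (hN : 0 < N) (lam rbar : ℝ) (hlam : 0 < lam) (hrbar : 0 < rbar)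
    (r : EuclideanSpace ℝ (Fin d) → EuclideanSpace ℝ (Fin d) → ℝ)
    (hsymm : ∀ x y, r x y = r y x)
    (hr0 : ∀ x y, 0 ≤ r x y) (hr1 : ∀ x y, r x y ≤ rbar)
    (x v : Fin N → ℝ → EuclideanSpace ℝ (Fin d))
    (hx : ∀ i t, HasDerivAt (x i) (v i t) t)
    (hv : ∀ i t, HasDerivAt (v i)
      ((lam / N) • ∑ j, r (x i t) (x j t) • (v j t - v i t)) t) :
    ∀ t, 0 ≤ t →
      (∑ i, ‖v i 0‖ ^ 2) * Real.exp (-2 * lam * rbar * t)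
        + (‖∑ i, v i 0‖ ^ 2 / N) * (1 - Real.exp (-2 * lam * rbar * t))
      ≤ ∑ i, ‖v i t‖ ^ 2 := by
  intro t ht
  have hNpos : (0:ℝ) < N := Nat.cast_pos.mpr hN
  set k : ℝ := 2 * lam * rbar with hkdef
  have hkpos : 0 < k := by positivity
  set c : ℝ := ‖∑ i, v i 0‖ ^ 2 / N with hcdef
  -- momentum conservation
  have hm1 : ∀ s : ℝ, ∑ i, v i s = ∑ i, v i 0 := by
    have hder : ∀ s, HasDerivAt (fun u => ∑ i, v i u) 0 s := by
      intro s
      have h := HasDerivAt.fun_sum (fun i (_ : i ∈ Finset.univ) => hv i s)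
      have hz : (∑ i, (lam / N) • ∑ j, r (x i s) (x j s) • (v j s - v i s)) = 0 := by
        rw [← Finset.smul_sum]
        have h1 : (∑ i, ∑ j, r (x i s) (x j s) • v j s)
            = ∑ i, ∑ j, r (x i s) (x j s) • v i s := by
          rw [Finset.sum_comm]
          exact Finset.sum_congr rfl fun i _ => Finset.sum_congr rfl fun j _ => by
            rw [hsymm]
        have h2 : (∑ i, ∑ j, r (x i s) (x j s) • (v j s - v i s)) = 0 := by
          simp only [smul_sub, Finset.sum_sub_distrib, h1, sub_self]
        rw [h2, smul_zero]
      rw [hz] at h; exact h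
    intro s
    exact is_const_of_deriv_eq_zero (fun u => (hder u).differentiableAt)
      (fun u => (hder u).deriv) s 0
  -- derivative of the kinetic energy
  have hD : ∀ u, HasDerivAt (fun s => ∑ i, ‖v i s‖ ^ 2)
      (∑ i, 2 * ⟪((lam / N) • ∑ j, r (x i u) (x j u) • (v j u - v i u)), v i u⟫) u := by
    intro u
    refine HasDerivAt.fun_sum fun i _ => ?_
    have h := HasDerivAt.inner (𝕜 := ℝ) (hv i u) (hv i u)
    have hfun : (fun s => ⟪v i s, v i s⟫) = fun s => ‖v i s‖ ^ 2 :=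
      funext fun s => real_inner_self_eq_norm_sq _
    rw [hfun] at h
    have heq : ⟪v i u, (lam / N) • ∑ j, r (x i u) (x j u) • (v j u - v i u)⟫
        + ⟪((lam / N) • ∑ j, r (x i u) (x j u) • (v j u - v i u)), v i u⟫
        = 2 * ⟪((lam / N) • ∑ j, r (x i u) (x j u) • (v j u - v i u)), v i u⟫ := by
      rw [real_inner_comm (v i u)]; ring
    rwa [heq] at h
  -- key differential inequality
  have hkey : ∀ u, k * c - k * (∑ i, ‖v i u‖ ^ 2)
      ≤ ∑ i, 2 * ⟪((lam / N) • ∑ j, r (x i u) (x j u) • (v j u - v i u)), v i u⟫ := by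
    intro u
    -- rewrite D as a double sum
    have hDval : (∑ i, 2 * ⟪((lam / N) • ∑ j, r (x i u) (x j u) • (v j u - v i u)), v i u⟫)
        = (2 * lam / N) * ∑ i, ∑ j, r (x i u) (x j u) * ⟪v j u - v i u, v i u⟫ := by
      rw [Finset.mul_sum]
      refine Finset.sum_congr rfl fun i _ => ?_
      rw [real_inner_smul_left, sum_inner]
      simp only [real_inner_smul_left]
      ring
    -- symmetrization : 2 S = - T
    have hsymS : 2 * (∑ i, ∑ j, r (x i u) (x j u) * ⟪v j u - v i u, v i u⟫)
        = - ∑ i, ∑ j, r (x i u) (x j u) * ‖v i u - v j u‖ ^ 2 := by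
      have hswap : (∑ i, ∑ j, r (x i u) (x j u) * ⟪v j u - v i u, v i u⟫)
          = ∑ i, ∑ j, r (x i u) (x j u) * ⟪v i u - v j u, v j u⟫ := by
        rw [Finset.sum_comm]
        exact Finset.sum_congr rfl fun i _ => Finset.sum_congr rfl fun j _ => by
          rw [hsymm]
      rw [two_mul]
      nth_rewrite 2 [hswap]
      rw [← Finset.sum_add_distrib, ← Finset.sum_neg_distrib]
      refine Finset.sum_congr rfl fun i _ => ?_
      rw [← Finset.sum_add_distrib, ← Finset.sum_neg_distrib]
      refine Finset.sum_congr rfl fun j _ => ?_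
      have : ⟪v j u - v i u, v i u⟫ + ⟪v i u - v j u, v j u⟫
          = -‖v i u - v j u‖ ^ 2 := by
        simp only [inner_sub_left, real_inner_self_eq_norm_sq, norm_sub_sq_real,
          real_inner_comm (v j u) (v i u)]
        ring
      rw [← mul_add, this]; ring
    -- bound T by rbar * U
    have hT : (∑ i, ∑ j, r (x i u) (x j u) * ‖v i u - v j u‖ ^ 2)
        ≤ rbar * ∑ i, ∑ j, ‖v i u - v j u‖ ^ 2 := by
      rw [Finset.mul_sum]
      refine Finset.sum_le_sum fun i _ => ?_
      rw [Finset.mul_sum]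
      exact Finset.sum_le_sum fun j _ =>
        mul_le_mul_of_nonneg_right (hr1 _ _) (sq_nonneg _)
    -- compute U
    have hU : (∑ i, ∑ j, ‖v i u - v j u‖ ^ 2)
        = 2 * N * (∑ i, ‖v i u‖ ^ 2) - 2 * ‖∑ i, v i u‖ ^ 2 := by
      have hinner : (∑ i, ∑ j, ⟪v i u, v j u⟫) = ‖∑ i, v i u‖ ^ 2 := by
        rw [← real_inner_self_eq_norm_sq, sum_inner]
        exact Finset.sum_congr rfl fun i _ => by rw [inner_sum]
      have e1 : (∑ i, ∑ j, ‖v i u - v j u‖ ^ 2)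
          = (∑ i, ∑ j, (‖v i u‖ ^ 2 + ‖v j u‖ ^ 2))
            - 2 * ∑ i, ∑ j, ⟪v i u, v j u⟫ := by
        rw [Finset.mul_sum, ← Finset.sum_sub_distrib]
        refine Finset.sum_congr rfl fun i _ => ?_
        rw [Finset.mul_sum, ← Finset.sum_sub_distrib]
        refine Finset.sum_congr rfl fun j _ => ?_
        rw [norm_sub_sq_real]; ring
      have e2a : (∑ _i : Fin N, ∑ _j : Fin N, ‖v _i u‖ ^ 2)
          = (N:ℝ) * ∑ i, ‖v i u‖ ^ 2 := by
        simp [Finset.sum_const, Finset.card_univ, Finset.mul_sum]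
      have e2b : (∑ _i : Fin N, ∑ j, ‖v j u‖ ^ 2)
          = (N:ℝ) * ∑ i, ‖v i u‖ ^ 2 := by
        simp [Finset.sum_const, Finset.card_univ]
      have e2 : (∑ i, ∑ j, (‖v i u‖ ^ 2 + ‖v j u‖ ^ 2))
          = 2 * N * (∑ i, ‖v i u‖ ^ 2) := by
        simp only [Finset.sum_add_distrib]
        rw [e2a, e2b]; ring
      rw [e1, e2, hinner]
    -- combine
    rw [hDval]
    have hlamN : (0:ℝ) < lam / N := by positivity
    have hconserved : ‖∑ i, v i u‖ ^ 2 = ‖∑ i, v i 0‖ ^ 2 := by rw [hm1 u]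
    have hS : (2 * lam / N) * ∑ i, ∑ j, r (x i u) (x j u) * ⟪v j u - v i u, v i u⟫
        = -(lam / N) * ∑ i, ∑ j, r (x i u) (x j u) * ‖v i u - v j u‖ ^ 2 := by
      have : (2 * lam / N) * ∑ i, ∑ j, r (x i u) (x j u) * ⟪v j u - v i u, v i u⟫
          = (lam / N) * (2 * ∑ i, ∑ j, r (x i u) (x j u) * ⟪v j u - v i u, v i u⟫) := by
        ring
      rw [this, hsymS]; ring
    rw [hS]
    have hineq : -(lam / N) * (∑ i, ∑ j, r (x i u) (x j u) * ‖v i u - v j u‖ ^ 2)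
        ≥ -(lam / N) * (rbar * ∑ i, ∑ j, ‖v i u - v j u‖ ^ 2) := by
      have := mul_le_mul_of_nonneg_left hT (le_of_lt hlamN)
      linarith
    have heval : -(lam / N) * (rbar * ∑ i, ∑ j, ‖v i u - v j u‖ ^ 2)
        = k * c - k * (∑ i, ‖v i u‖ ^ 2) := by
      rw [hU, hcdef, hkdef, ← hconserved]
      field_simp
      ring
    linarith [hineq, heval.symm.le, heval.le]
  -- Gronwall-type argument
  set E : ℝ := Real.exp (k * t) with hEdef
  have hEpos : 0 < E := Real.exp_pos _
  have hg : ∀ u, HasDerivAt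
      (fun s => ((∑ i, ‖v i s‖ ^ 2) - c) * Real.exp (k * s))
      ((∑ i, 2 * ⟪((lam / N) • ∑ j, r (x i u) (x j u) • (v j u - v i u)), v i u⟫)
          * Real.exp (k * u)
        + ((∑ i, ‖v i u‖ ^ 2) - c) * (Real.exp (k * u) * k)) u := by
    intro u
    have h1 : HasDerivAt (fun s => (∑ i, ‖v i s‖ ^ 2) - c)
        (∑ i, 2 * ⟪((lam / N) • ∑ j, r (x i u) (x j u) • (v j u - v i u)), v i u⟫) u :=
      (hD u).sub_const c
    have h2 : HasDerivAt (fun s : ℝ => Real.exp (k * s)) (Real.exp (k * u) * k) u := by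
      simpa using (HasDerivAt.exp ((hasDerivAt_id u).const_mul k))
    exact h1.mul h2
  have hmono : Monotone (fun s => ((∑ i, ‖v i s‖ ^ 2) - c) * Real.exp (k * s)) := by
    refine monotone_of_deriv_nonneg (fun u => (hg u).differentiableAt) fun u => ?_
    rw [(hg u).deriv]
    have h := hkey u
    have he := Real.exp_pos (k * u)
    nlinarith [mul_le_mul_of_nonneg_right h (le_of_lt he)]
  have hmt := hmono ht
  simp only [mul_zero, Real.exp_zero, mul_one] at hmt
  -- conclude
  have hE' : Real.exp (-2 * lam * rbar * t) = E⁻¹ := by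
    rw [hEdef, ← Real.exp_neg]
    congr 1
    rw [hkdef]; ring
  rw [hE']
  have h3 : ((∑ i, ‖v i 0‖ ^ 2) - c) * E⁻¹ ≤ (∑ i, ‖v i t‖ ^ 2) - c := by
    have := mul_le_mul_of_nonneg_right hmt (le_of_lt (inv_pos.mpr hEpos))
    rwa [mul_assoc, mul_inv_cancel₀ (ne_of_gt hEpos), mul_one] at this
  have hexp : (0:ℝ) < E⁻¹ := inv_pos.mpr hEpos
  nlinarith [h3]
end

section
/- Let (x_i, v_i) solve the Cucker-Smale system with translation-invariant decreasing kernel r, and define the velocity fluctuation E(t) = ∑_{i=1}^N |v_i(t) − v_c|², where v_c is the (constant) mean velocity, and φ(t) = min_{1≤i,j≤N} r(|x_i(t) − x_j(t)|). Then E(t) ≤ E(0) e^{−2λ Φ(t)} where Φ(t) = ∫₀^t φ(τ) dτ. -/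
open Real Finset MeasureTheory
open scoped RealInnerProductSpace

section aux
variable {H : Type*} [NormedAddCommGroup H] [InnerProductSpace ℝ H]

lemma cs_sum_sq_dist {N : ℕ} (w : Fin N → H) (hw : ∑ i, w i = 0) :
    ∑ i, ∑ j, ‖w i - w j‖ ^ 2 = 2 * N * ∑ i, ‖w i‖ ^ 2 := by
  have h2 : ∑ i, ∑ j, ⟪w i, w j⟫ = (0 : ℝ) := by
    have : ∑ i, ∑ j, ⟪w i, w j⟫ = ⟪∑ i, w i, ∑ j, w j⟫ := by
      rw [sum_inner]
      exact Finset.sum_congr rfl fun i _ => (inner_sum _ _ _).symm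
    rw [this, hw, inner_zero_left]
  have h1 : ∀ i j : Fin N, ‖w i - w j‖ ^ 2
      = ‖w i‖ ^ 2 + ‖w j‖ ^ 2 - 2 * ⟪w i, w j⟫ := by
    intro i j; rw [norm_sub_sq_real]; ring
  calc ∑ i, ∑ j, ‖w i - w j‖ ^ 2
      = ∑ i, ∑ j, (‖w i‖ ^ 2 + ‖w j‖ ^ 2 - 2 * ⟪w i, w j⟫) := by
        exact Finset.sum_congr rfl fun i _ => Finset.sum_congr rfl fun j _ => h1 i j
    _ = 2 * N * ∑ i, ‖w i‖ ^ 2 := by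
        simp [Finset.sum_add_distrib, Finset.sum_sub_distrib, Finset.mul_sum, h2,
          Finset.sum_const, ← Finset.mul_sum]
        ring

lemma cs_key {N : ℕ} (w : Fin N → H)
    (c : Fin N → Fin N → ℝ) (hsymm : ∀ i j, c i j = c j i) :
    2 * (∑ i, ∑ j, c i j * ⟪w j - w i, w i⟫)
      = -∑ i, ∑ j, c i j * ‖w i - w j‖ ^ 2 := by
  have hswap : (∑ i, ∑ j, c i j * ⟪w j - w i, w i⟫)
      = ∑ i, ∑ j, c i j * ⟪w i - w j, w j⟫ := by
    rw [Finset.sum_comm]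
    exact Finset.sum_congr rfl fun i _ => Finset.sum_congr rfl fun j _ => by
      rw [hsymm i j]
  calc 2 * (∑ i, ∑ j, c i j * ⟪w j - w i, w i⟫)
      = (∑ i, ∑ j, c i j * ⟪w j - w i, w i⟫)
        + ∑ i, ∑ j, c i j * ⟪w i - w j, w j⟫ := by rw [← hswap]; ring
    _ = ∑ i, ∑ j, (c i j * ⟪w j - w i, w i⟫ + c i j * ⟪w i - w j, w j⟫) := by
        rw [← Finset.sum_add_distrib]
        exact Finset.sum_congr rfl fun i _ => (Finset.sum_add_distrib).symm
    _ = -∑ i, ∑ j, c i j * ‖w i - w j‖ ^ 2 := by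
        rw [← Finset.sum_neg_distrib]
        refine Finset.sum_congr rfl fun i _ => ?_
        rw [← Finset.sum_neg_distrib]
        refine Finset.sum_congr rfl fun j _ => ?_
        have key : (⟪w j - w i, w i⟫ : ℝ) + ⟪w i - w j, w j⟫ = -‖w i - w j‖ ^ 2 := by
          have h3 : (⟪w j - w i, w i⟫ : ℝ) = -⟪w i - w j, w i⟫ := by
            rw [← inner_neg_left, neg_sub]
          rw [h3, ← real_inner_self_eq_norm_sq, inner_sub_right (𝕜 := ℝ)]
          ring
        rw [← mul_add, key]; ring
end aux

/-- Decay of velocity fluctuations for the Cucker-Smale system with a decreasing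
translation-invariant kernel: `E(t) ≤ E(0) exp(-2λΦ(t))`, `Φ(t) = ∫₀ᵗ φ`. -/
theorem cucker_smale_velocity_fluctuation_decay
    {d N : ℕ} (hN : 0 < N) (lam : ℝ) (hlam : 0 < lam)
    (r : ℝ → ℝ) (hr0 : ∀ s, 0 ≤ r s) (hrmono : Antitone r)
    (x v : Fin N → ℝ → EuclideanSpace ℝ (Fin d))
    (hx : ∀ i t, HasDerivAt (x i) (v i t) t)
    (hv : ∀ i t, HasDerivAt (v i)
      ((lam / N) • ∑ j, r ‖x i t - x j t‖ • (v j t - v i t)) t)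
    (vc : EuclideanSpace ℝ (Fin d)) (hvc : vc = (N : ℝ)⁻¹ • ∑ i, v i 0)
    (φ : ℝ → ℝ)
    (hφ : ∀ t, IsLeast (Set.range fun p : Fin N × Fin N => r ‖x p.1 t - x p.2 t‖) (φ t)) :
    ∀ t, 0 ≤ t →
      ∑ i, ‖v i t - vc‖ ^ 2
        ≤ (∑ i, ‖v i 0 - vc‖ ^ 2) * Real.exp (-2 * lam * ∫ τ in (0:ℝ)..t, φ τ) := by
  have hNR : (0:ℝ) < N := by exact_mod_cast hN
  set E : ℝ → ℝ := fun t => ∑ i, ‖v i t - vc‖ ^ 2 with hEdef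
  set c : ℝ → Fin N → Fin N → ℝ := fun t i j => r ‖x i t - x j t‖ with hcdef
  set D : ℝ → ℝ := fun t => ∑ i, ∑ j, c t i j * ⟪v j t - v i t, v i t - vc⟫ with hDdef
  have hcsymm : ∀ t i j, c t i j = c t j i := fun t i j => by
    simp only [hcdef, norm_sub_rev]
  have hcphi : ∀ t i j, φ t ≤ c t i j := fun t i j => (hφ t).2 ⟨⟨i, j⟩, rfl⟩
  have hcr0 : ∀ t i j, c t i j ≤ r 0 := fun t i j => hrmono (norm_nonneg _)
  have hφ0 : ∀ t, 0 ≤ φ t := by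
    intro t
    obtain ⟨p, hp⟩ := (hφ t).1
    rw [← hp]; exact hr0 _
  have hr0nn : 0 ≤ r 0 := hr0 0
  -- derivative of E
  have hE' : ∀ t, HasDerivAt E (2 * (lam / N) * D t) t := by
    intro t
    have hterm : ∀ i : Fin N, HasDerivAt (fun s => ‖v i s - vc‖ ^ 2)
        (2 * ((lam / N) * ∑ j, c t i j * ⟪v j t - v i t, v i t - vc⟫)) t := by
      intro i
      have hf : HasDerivAt (fun s => v i s - vc)
          ((lam / N) • ∑ j, c t i j • (v j t - v i t)) t := (hv i t).sub_const vc
      have h2 := (hf.inner ℝ hf)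
      have hfun : (fun s => (⟪v i s - vc, v i s - vc⟫ : ℝ)) = fun s => ‖v i s - vc‖ ^ 2 := by
        funext s; exact real_inner_self_eq_norm_sq _
      rw [hfun] at h2
      refine h2.congr_deriv ?_
      symm
      simp only [real_inner_smul_left, real_inner_smul_right, sum_inner, inner_sum,
        real_inner_comm (v i t - vc)]
      ring
    have := HasDerivAt.fun_sum (fun i (_ : i ∈ Finset.univ) => hterm i)
    refine this.congr_deriv ?_
    symm
    rw [hDdef, Finset.mul_sum]
    exact Finset.sum_congr rfl fun i _ => by ring
  -- conservation of momentum
  have hS : ∀ t, HasDerivAt (fun s => ∑ i, v i s) 0 t := by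
    intro t
    have := HasDerivAt.fun_sum (fun i (_ : i ∈ Finset.univ) => hv i t)
    refine this.congr_deriv ?_
    symm
    rw [← Finset.smul_sum]
    have hz : ∑ i, ∑ j, c t i j • (v j t - v i t) = (0 : EuclideanSpace ℝ (Fin d)) := by
      have : ∑ i, ∑ j, c t i j • (v j t - v i t)
          = (∑ i, ∑ j, c t i j • v j t) - ∑ i, ∑ j, c t i j • v i t := by
        simp [smul_sub, Finset.sum_sub_distrib]
      rw [this]
      have hswap : (∑ i, ∑ j, c t i j • v j t) = ∑ i, ∑ j, c t i j • v i t := by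
        rw [Finset.sum_comm]
        exact Finset.sum_congr rfl fun i _ => Finset.sum_congr rfl fun j _ => by
          rw [hcsymm t i j]
      rw [hswap, sub_self]
    rw [hz, smul_zero]
  have hconst : ∀ t, ∑ i, v i t = ∑ i, v i 0 := by
    intro t
    exact is_const_of_deriv_eq_zero (fun s => (hS s).differentiableAt)
      (fun s => (hS s).deriv) t 0
  have hw0 : ∀ t, ∑ i, (v i t - vc) = (0 : EuclideanSpace ℝ (Fin d)) := by
    intro t
    rw [Finset.sum_sub_distrib, hconst t, Finset.sum_const, Finset.card_univ,
      Fintype.card_fin, hvc, sub_eq_zero, ← Nat.cast_smul_eq_nsmul ℝ, smul_smul]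
    rw [mul_inv_cancel₀ (ne_of_gt hNR), one_smul]
  have hEnn : ∀ t, 0 ≤ E t := fun t => Finset.sum_nonneg fun i _ => sq_nonneg _
  -- bounds on D
  have hDkey : ∀ t, 2 * D t = -∑ i, ∑ j, c t i j * ‖v i t - v j t‖ ^ 2 := by
    intro t
    have := cs_key (fun i => v i t - vc) (c t) (hcsymm t)
    simp only [sub_sub_sub_cancel_right] at this
    exact this
  have hsumsq : ∀ t, ∑ i, ∑ j, ‖v i t - v j t‖ ^ 2 = 2 * N * E t := by
    intro t
    have := cs_sum_sq_dist (fun i => v i t - vc) (hw0 t)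
    simp only [sub_sub_sub_cancel_right] at this
    exact this
  have hDub : ∀ t, 2 * D t ≤ -(φ t * (2 * N * E t)) := by
    intro t
    rw [hDkey t, neg_le_neg_iff, ← hsumsq t, Finset.mul_sum]
    refine Finset.sum_le_sum fun i _ => ?_
    rw [Finset.mul_sum]
    exact Finset.sum_le_sum fun j _ =>
      mul_le_mul_of_nonneg_right (hcphi t i j) (sq_nonneg _)
  have hDlb : ∀ t, -(r 0 * (2 * N * E t)) ≤ 2 * D t := by
    intro t
    rw [hDkey t, neg_le_neg_iff, ← hsumsq t, Finset.mul_sum]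
    refine Finset.sum_le_sum fun i _ => ?_
    rw [Finset.mul_sum]
    exact Finset.sum_le_sum fun j _ =>
      mul_le_mul_of_nonneg_right (hcr0 t i j) (sq_nonneg _)
  -- derivative bounds
  have hE'le : ∀ t, 2 * (lam / N) * D t ≤ -(2 * lam * (φ t * E t)) := by
    intro t
    have h1 : (lam / N) * (2 * D t) ≤ (lam / N) * (-(φ t * (2 * N * E t))) :=
      mul_le_mul_of_nonneg_left (hDub t) (le_of_lt (div_pos hlam hNR))
    calc 2 * (lam / N) * D t = (lam / N) * (2 * D t) := by ring
      _ ≤ (lam / N) * (-(φ t * (2 * N * E t))) := h1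
      _ = -(2 * lam * (φ t * E t)) := by field_simp
  have hE'lb : ∀ t, -(2 * lam * (r 0 * E t)) ≤ 2 * (lam / N) * D t := by
    intro t
    have h1 : (lam / N) * (-(r 0 * (2 * N * E t))) ≤ (lam / N) * (2 * D t) :=
      mul_le_mul_of_nonneg_left (hDlb t) (le_of_lt (div_pos hlam hNR))
    calc -(2 * lam * (r 0 * E t)) = (lam / N) * (-(r 0 * (2 * N * E t))) := by
          field_simp
      _ ≤ (lam / N) * (2 * D t) := h1
      _ = 2 * (lam / N) * D t := by ring
  have hE'np : ∀ t, 2 * (lam / N) * D t ≤ 0 := by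
    intro t
    refine le_trans (hE'le t) ?_
    have : 0 ≤ 2 * lam * (φ t * E t) :=
      mul_nonneg (by linarith) (mul_nonneg (hφ0 t) (hEnn t))
    linarith
  -- E is antitone
  have hEdiff : Differentiable ℝ E := fun s => (hE' s).differentiableAt
  have hAnti : Antitone E := antitone_of_deriv_nonpos hEdiff (fun s => by
    rw [(hE' s).deriv]; exact hE'np s)
  -- continuity / measurability
  have hxcont : ∀ i, Continuous (x i) := fun i =>
    Differentiable.continuous (fun s => (hx i s).differentiableAt)
  have hvcont : ∀ i, Continuous (v i) := fun i =>
    Differentiable.continuous (fun s => (hv i s).differentiableAt)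
  have hEcont : Continuous E := hEdiff.continuous
  have hDmeas : Measurable D := by
    refine Finset.measurable_sum _ fun i _ => Finset.measurable_sum _ fun j _ =>
      Measurable.mul ?_ ?_
    · exact hrmono.measurable.comp ((hxcont i).sub (hxcont j)).norm.measurable
    · exact (Continuous.inner ((hvcont j).sub (hvcont i))
        ((hvcont i).sub continuous_const)).measurable
  -- main argument
  intro t ht
  show E t ≤ E 0 * Real.exp (-2 * lam * ∫ τ in (0:ℝ)..t, φ τ)
  rcases (hEnn t).eq_or_lt with h0 | hpos
  · rw [← h0]
    exact mul_nonneg (hEnn 0) (Real.exp_nonneg _)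
  · have hE0pos : 0 < E 0 := lt_of_lt_of_le hpos (hAnti ht)
    have hEpos : ∀ τ, 0 ≤ τ → τ ≤ t → 0 < E τ := fun τ _ h2 =>
      lt_of_lt_of_le hpos (hAnti h2)
    set g : ℝ → ℝ := fun τ => 2 * (lam / N) * D τ / E τ with hgdef
    have hgmeas : Measurable g := (measurable_const.mul hDmeas).div hEcont.measurable
    have hgbound : ∀ τ, 0 ≤ τ → τ ≤ t → |g τ| ≤ 2 * lam * r 0 := by
      intro τ h1 h2
      have hEτ := hEpos τ h1 h2
      have hnum : |2 * (lam / N) * D τ| ≤ 2 * lam * (r 0 * E τ) := by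
        refine abs_le.2 ⟨hE'lb τ, le_trans (hE'np τ) ?_⟩
        exact mul_nonneg (by linarith) (mul_nonneg hr0nn (hEnn τ))
      rw [hgdef]
      rw [abs_div, abs_of_pos hEτ, div_le_iff₀ hEτ]
      calc |2 * (lam / N) * D τ| ≤ 2 * lam * (r 0 * E τ) := hnum
        _ = 2 * lam * r 0 * E τ := by ring
    have hgInt : IntervalIntegrable g volume 0 t := by
      refine (intervalIntegrable_const (c := 2 * lam * r 0)).mono_fun
        hgmeas.aestronglyMeasurable ?_
      rw [Filter.EventuallyLE, ae_restrict_iff' measurableSet_uIoc]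
      refine Filter.Eventually.of_forall fun τ hτ => ?_
      rw [Set.uIoc_of_le ht] at hτ
      have h := hgbound τ (le_of_lt hτ.1) hτ.2
      rw [Real.norm_eq_abs, Real.norm_eq_abs]
      exact le_trans h (le_abs_self _)
    have hlog : ∀ τ ∈ Set.uIcc (0:ℝ) t, HasDerivAt (fun s => Real.log (E s)) (g τ) τ := by
      intro τ hτ
      rw [Set.uIcc_of_le ht] at hτ
      exact (hE' τ).log (ne_of_gt (hEpos τ hτ.1 hτ.2))
    have hFTC : ∫ τ in (0:ℝ)..t, g τ = Real.log (E t) - Real.log (E 0) :=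
      intervalIntegral.integral_eq_sub_of_hasDerivAt hlog hgInt
    by_cases hφInt : IntervalIntegrable φ volume 0 t
    · have hmono : ∫ τ in (0:ℝ)..t, g τ ≤ ∫ τ in (0:ℝ)..t, (-2 * lam) * φ τ := by
        refine intervalIntegral.integral_mono_on ht hgInt (hφInt.const_mul _)
          fun τ hτ => ?_
        have hEτ := hEpos τ hτ.1 hτ.2
        rw [hgdef, div_le_iff₀ hEτ]
        calc 2 * (lam / N) * D τ ≤ -(2 * lam * (φ τ * E τ)) := hE'le τ
          _ = (-2 * lam) * φ τ * E τ := by ring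
      rw [intervalIntegral.integral_const_mul, hFTC] at hmono
      have hlogle : Real.log (E t)
          ≤ Real.log (E 0) + (-2 * lam) * ∫ τ in (0:ℝ)..t, φ τ := by linarith
      calc E t = Real.exp (Real.log (E t)) := (Real.exp_log hpos).symm
        _ ≤ Real.exp (Real.log (E 0) + (-2 * lam) * ∫ τ in (0:ℝ)..t, φ τ) :=
            Real.exp_le_exp.2 hlogle
        _ = E 0 * Real.exp (-2 * lam * ∫ τ in (0:ℝ)..t, φ τ) := by
            rw [Real.exp_add, Real.exp_log hE0pos]
    · rw [intervalIntegral.integral_undef hφInt, mul_zero, Real.exp_zero, mul_one]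
      exact hAnti ht
end
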